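/- arXiv:2204.01577 — 2 statements merged into one kernel-verified Lean document; each statement's English description precedes it below -/
import Mathlib

section
/- Let f be a holomorphic injective function on the unit disk 𝔻. Then for every r ∈ (0,1), ∫₀^{2π} f♯(re^{it})² dt = (2/r²) ∬_{|z|<r} h_f(z) f♯(z)² dA(z). -/
open Complex MeasureTheory Set Real

/-- The spherical derivative `f♯(z) = |f'(z)| / (1 + |f(z)|²)`. -/
noncomputable def sphDeriv (f : ℂ → ℂ) (z : ℂ) : ℝ :=
  ‖deriv f z‖ / (1 + ‖f z‖ ^ 2)

/-- The auxiliary function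
`h_f(z) = Re(1 + z f''(z)/f'(z) − 2 z f'(z) conj(f(z)) / (1 + |f(z)|²))`. -/
noncomputable def hfun (f : ℂ → ℂ) (z : ℂ) : ℝ :=
  (1 + z * deriv (deriv f) z / deriv f z -
    2 * z * deriv f z * (starRingEnd ℂ) (f z) /
      ((1 + ‖f z‖ ^ 2 : ℝ) : ℂ)).re

/-- `f` is spherically convex on the unit disk: holomorphic, injective,
and `h_f ≥ 0` on the disk. -/
def SphConvex (f : ℂ → ℂ) : Prop :=
  DifferentiableOn ℂ f (Metric.ball 0 1) ∧
  Set.InjOn f (Metric.ball 0 1) ∧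
  ∀ z ∈ Metric.ball (0 : ℂ) 1, 0 ≤ hfun f z

/-- `f` is a spherical isometry: `f(z) = e^{iθ}(z − a)/(1 + conj(a) z)` on the disk. -/
def SphIsometry (f : ℂ → ℂ) : Prop :=
  ∃ (θ : ℝ) (a : ℂ),
    (∀ z ∈ Metric.ball (0 : ℂ) 1, 1 + (starRingEnd ℂ) a * z ≠ 0) ∧
    ∀ z ∈ Metric.ball (0 : ℂ) 1,
      f z = Complex.exp (θ * Complex.I) * (z - a) / (1 + (starRingEnd ℂ) a * z)

/-- The spherical area `Ar_S f(r𝔻) = ∬_{|z|<r} f♯(z)² dA(z)`. -/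
noncomputable def sphArea (f : ℂ → ℂ) (r : ℝ) : ℝ :=
  ∫ z in Metric.ball (0 : ℂ) r, (sphDeriv f z) ^ 2

/-- The spherical length `Le_S f(r𝕋) = r ∫₀^{2π} f♯(r e^{it}) dt`. -/
noncomputable def sphLen (f : ℂ → ℂ) (r : ℝ) : ℝ :=
  r * ∫ t in (0 : ℝ)..(2 * π), sphDeriv f ((r : ℂ) * Complex.exp (t * Complex.I))

/-- `f` is centrally normalized: `f(0) = 0`, `f''(0) = 0`, `f'(0) > 0`, and
`(1 − |z|²) f♯(z) ≤ f'(0)` on the disk. -/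
def CentNormalized (f : ℂ → ℂ) : Prop :=
  f 0 = 0 ∧ deriv (deriv f) 0 = 0 ∧ (deriv f 0).im = 0 ∧ 0 < (deriv f 0).re ∧
  ∀ z ∈ Metric.ball (0 : ℂ) 1,
    (1 - ‖z‖ ^ 2) * sphDeriv f z ≤ (deriv f 0).re

section Aux

open Metric Filter Topology

lemma aux_deriv_ne_zero {f : ℂ → ℂ} (hd : DifferentiableOn ℂ f (ball 0 1))
    (hi : Set.InjOn f (ball 0 1)) {a : ℂ} (ha : a ∈ ball (0:ℂ) 1) :
    deriv f a ≠ 0 := by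
  intro h0
  have hop : IsOpen (ball (0:ℂ) 1) := isOpen_ball
  have hmem : ball (0:ℂ) 1 ∈ 𝓝 a := hop.mem_nhds ha
  have hfa : AnalyticAt ℂ f a := hd.analyticAt hmem
  set F : ℂ → ℂ := fun z => f z - f a with hF
  have hFa : AnalyticAt ℂ F a := hfa.sub analyticAt_const
  by_cases hev : ∀ᶠ z in 𝓝 a, F z = 0
  · -- f locally constant, contradicting injectivity
    have : ∀ᶠ z in 𝓝[≠] a, F z = 0 ∧ z ∈ ball (0:ℂ) 1 :=
      ((hev.and hmem).filter_mono nhdsWithin_le_nhds)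
    obtain ⟨z, ⟨hz0, hzb⟩, hzne⟩ := (this.and self_mem_nhdsWithin).exists
    exact hzne (hi hzb ha (by simpa [hF, sub_eq_zero] using hz0))
  · obtain ⟨n, g, hg_an, hg_ne, hg_eq⟩ :=
      hFa.exists_eventuallyEq_pow_smul_nonzero_iff.mpr hev
    simp only [smul_eq_mul] at hg_eq
    have hFa0 : F a = 0 := by simp [hF]
    have hga := hg_eq.self_of_nhds
    have hn0 : n ≠ 0 := by
      rintro rfl; simp [hFa0] at hga; exact hg_ne hga.symm
    have hn1 : n ≠ 1 := by
      rintro rfl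
      have hd1 : HasDerivAt (fun z => (z - a) ^ 1 * g z) (g a) a := by
        have := (((hasDerivAt_id a).sub_const a).mul hg_an.differentiableAt.hasDerivAt)
        simp only [pow_one]
        exact this.congr_deriv (by simp)
      have hdF : deriv F a = g a := by
        rw [Filter.EventuallyEq.deriv_eq hg_eq]; exact hd1.deriv
      have : deriv F a = 0 := by
        have : deriv F a = deriv f a := by
          simp [hF, deriv_sub_const]
        rw [this, h0]
      exact hg_ne (by rw [← hdF, this])
    have hn2 : 2 ≤ n := by omega
    -- construct n-th root of g near a
    set c := g a with hc
    set b := Complex.exp (Complex.log c / n) with hb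
    have hbn : b ^ n = c := by
      rw [hb, ← Complex.exp_nat_mul, mul_div_cancel₀ _ (by exact_mod_cast hn0 : (n:ℂ) ≠ 0),
        Complex.exp_log hg_ne]
    set h : ℂ → ℂ := fun z => b * Complex.exp (Complex.log (g z / c) / n) with hh
    have hnC : (n:ℂ) ≠ 0 := by exact_mod_cast hn0
    have hh_an : AnalyticAt ℂ h a := by
      have h1 : AnalyticAt ℂ (fun z => g z / c) a := hg_an.div analyticAt_const hg_ne
      have h2 : AnalyticAt ℂ (Complex.log ∘ fun z => g z / c) a :=
        AnalyticAt.comp (analyticAt_clog (by rw [div_self hg_ne]; exact Complex.one_mem_slitPlane : c / c ∈ Complex.slitPlane)) h1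
      have h2' : AnalyticAt ℂ (fun z => Complex.log (g z / c)) a := h2
      exact analyticAt_const.mul (analyticAt_cexp.comp (h2'.div analyticAt_const hnC))
    have hgev : ∀ᶠ z in 𝓝 a, g z ≠ 0 := hg_an.continuousAt.eventually_ne hg_ne
    have hpow : ∀ᶠ z in 𝓝 a, h z ^ n = g z := by
      filter_upwards [hgev] with z hz
      rw [hh]
      simp only [mul_pow, ← Complex.exp_nat_mul, mul_div_cancel₀ _
        (by exact_mod_cast hn0 : (n:ℂ) ≠ 0), hbn]
      rw [Complex.exp_log (div_ne_zero hz hg_ne), mul_div_cancel₀ _ hg_ne]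
    set ψ : ℂ → ℂ := fun z => (z - a) * h z with hψ
    have hψ_an : AnalyticAt ℂ ψ a := ((analyticAt_id.sub analyticAt_const).mul hh_an)
    have hψa : ψ a = 0 := by simp [hψ]
    have hha : h a = b := by
      show b * Complex.exp (Complex.log (c / c) / n) = b
      simp [div_self hg_ne]
    have hb0 : b ≠ 0 := Complex.exp_ne_zero _
    have hψev : ∀ᶠ z in 𝓝 a, F z = ψ z ^ n := by
      filter_upwards [hg_eq, hpow] with z h1 h2
      rw [h1, hψ, mul_pow, h2]
    -- ψ is not locally constant
    have hnc : ¬ (∀ᶠ z in 𝓝 a, ψ z = ψ a) := by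
      intro hcst
      apply hev
      filter_upwards [hψev, hcst] with z h1 h2
      rw [h1, h2, hψa, zero_pow hn0]
    rcases hψ_an.eventually_constant_or_nhds_le_map_nhds with h | hle
    · exact hnc h
    rw [hψa] at hle
    -- get a ball around 0 inside ψ '' U
    set U := {z | F z = ψ z ^ n} ∩ ball (0:ℂ) 1 with hU
    have hUnhds : U ∈ 𝓝 a := inter_mem hψev hmem
    have himg : ψ '' U ∈ 𝓝 (0:ℂ) := hle (image_mem_map hUnhds)
    obtain ⟨δ, hδ0, hδ⟩ := Metric.mem_nhds_iff.mp himg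
    set ζ := Complex.exp ((2 * π / n : ℝ) * Complex.I) with hζ
    have hζn : ζ ^ n = 1 := by
      rw [hζ, ← Complex.exp_nat_mul]
      have : (n:ℂ) * ((2 * π / n : ℝ) * Complex.I) = 2 * π * Complex.I := by
        push_cast
        field_simp [hnC]
      rw [this, Complex.exp_two_pi_mul_I]
    have hζ1 : ζ ≠ 1 := by
      rw [hζ, Ne, Complex.exp_eq_one_iff]
      rintro ⟨k, hk⟩
      have him : (2 * π / (n:ℝ)) = (k:ℝ) * (2 * π) := by
        have := congrArg Complex.im hk
        simpa using this
      have hπ : (0:ℝ) < π := Real.pi_pos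
      have hn' : (2:ℝ) ≤ (n:ℝ) := by exact_mod_cast hn2
      rcases le_or_gt k 0 with hk0 | hk0
      · have hk0' : (k:ℝ) ≤ 0 := by exact_mod_cast hk0
        have h1 : (k:ℝ) * (2 * π) ≤ 0 := mul_nonpos_of_nonpos_of_nonneg hk0' (by positivity)
        have h2 : (0:ℝ) < 2 * π / n := by positivity
        linarith
      · have h1 : (1:ℝ) ≤ (k:ℝ) := by exact_mod_cast hk0
        have h2 : 2 * π / (n:ℝ) ≤ π := by
          rw [div_le_iff₀ (by positivity)]
          nlinarith
        nlinarith
    set w : ℂ := ((δ / 2 : ℝ) : ℂ) with hw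
    have hw0 : w ≠ 0 := by
      simp [hw]
      positivity
    have hwin : w ∈ Metric.ball (0:ℂ) δ := by
      simp only [Metric.mem_ball, dist_zero_right, hw, Complex.norm_real, Real.norm_eq_abs]
      rw [abs_of_pos (by positivity : (0:ℝ) < δ/2)]
      linarith
    have hwζin : w * ζ ∈ Metric.ball (0:ℂ) δ := by
      simp only [Metric.mem_ball, dist_zero_right] at hwin ⊢
      rw [norm_mul]
      have hz1 : ‖ζ‖ = 1 := by
        rw [hζ, Complex.norm_exp_ofReal_mul_I]
      rw [hz1, mul_one]
      exact hwin
    obtain ⟨z₁, hz₁U, hz₁⟩ := hδ hwin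
    obtain ⟨z₂, hz₂U, hz₂⟩ := hδ hwζin
    have hne : z₁ ≠ z₂ := by
      rintro rfl
      rw [hz₂] at hz₁
      have : w * 1 = w * ζ := by rw [mul_one, hz₁]
      exact hζ1 (mul_left_cancel₀ hw0 this).symm
    have hfz : f z₁ = f z₂ := by
      have h1 : F z₁ = w ^ n := by rw [hz₁U.1, hz₁]
      have h2 : F z₂ = w ^ n := by rw [hz₂U.1, hz₂, mul_pow, hζn, mul_one]
      have : F z₁ = F z₂ := by rw [h1, h2]
      simpa [hF, sub_eq_sub_iff_sub_eq_sub, sub_self] using this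
    exact hne (hi hz₁U.2 hz₂U.2 hfz)

lemma sphDeriv_sq (f : ℂ → ℂ) (z : ℂ) :
    sphDeriv f z ^ 2 = normSq (deriv f z) / (1 + normSq (f z)) ^ 2 := by
  rw [sphDeriv, div_pow, Complex.sq_norm]
  congr 2
  rw [Complex.sq_norm]

lemma hasDerivAt_normSq_comp {v : ℝ → ℂ} {v' : ℂ} {s : ℝ} (h : HasDerivAt v v' s) :
    HasDerivAt (fun σ => Complex.normSq (v σ)) (2 * (v' * (starRingEnd ℂ) (v s)).re) s := by
  have hre : HasDerivAt (fun σ => (v σ).re) v'.re s :=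
    Complex.reCLM.hasFDerivAt.comp_hasDerivAt s h
  have him : HasDerivAt (fun σ => (v σ).im) v'.im s :=
    Complex.imCLM.hasFDerivAt.comp_hasDerivAt s h
  have h2 := (hre.mul hre).add (him.mul him)
  refine h2.congr_deriv ?_
  simp only [Complex.mul_re, Complex.conj_re, Complex.conj_im]
  ring

lemma hfun_eq {f : ℂ → ℂ} {z : ℂ} (h' : deriv f z ≠ 0) :
    hfun f z = 1 + (z * deriv (deriv f) z * (starRingEnd ℂ) (deriv f z)).re
        / normSq (deriv f z)
      - 2 * (z * deriv f z * (starRingEnd ℂ) (f z)).re / (1 + normSq (f z)) := by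
  have hc : (starRingEnd ℂ) (deriv f z) ≠ 0 := by
    simpa using h'
  have h1 : z * deriv (deriv f) z / deriv f z
      = (z * deriv (deriv f) z * (starRingEnd ℂ) (deriv f z)) /
        ((normSq (deriv f z) : ℝ) : ℂ) := by
    rw [show ((normSq (deriv f z) : ℝ) : ℂ) = deriv f z * (starRingEnd ℂ) (deriv f z) from
      (Complex.mul_conj _).symm]
    exact (mul_div_mul_right _ _ hc).symm
  rw [hfun, h1]
  rw [Complex.sub_re, Complex.add_re, Complex.one_re, Complex.div_ofReal_re,
    Complex.div_ofReal_re]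
  rw [Complex.sq_norm]
  have h2 : ((2:ℂ) * z * deriv f z * (starRingEnd ℂ) (f z)).re
      = 2 * (z * deriv f z * (starRingEnd ℂ) (f z)).re := by
    rw [show (2:ℂ) * z * deriv f z * (starRingEnd ℂ) (f z)
        = 2 * (z * deriv f z * (starRingEnd ℂ) (f z)) by ring]
    simp
  rw [h2]

lemma key_deriv {f : ℂ → ℂ} (hd : DifferentiableOn ℂ f (Metric.ball 0 1))
    (hne : ∀ z ∈ Metric.ball (0:ℂ) 1, deriv f z ≠ 0) {e : ℂ} (he : ‖e‖ = 1)
    {s : ℝ} (hs : |s| < 1) :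
    HasDerivAt (fun σ : ℝ => σ ^ 2 / 2 * sphDeriv f ((σ:ℂ) * e) ^ 2)
      (s * (hfun f ((s:ℂ) * e) * sphDeriv f ((s:ℂ) * e) ^ 2)) s := by
  have han : AnalyticOnNhd ℂ f (Metric.ball 0 1) := hd.analyticOnNhd isOpen_ball
  have han' : AnalyticOnNhd ℂ (deriv f) (Metric.ball 0 1) := han.deriv
  set z := (s:ℂ) * e with hzdef
  have hz : z ∈ Metric.ball (0:ℂ) 1 := by
    rw [mem_ball_zero_iff, hzdef, norm_mul, Complex.norm_real, he,
      mul_one, Real.norm_eq_abs]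
    exact hs
  have hmul : HasDerivAt (fun w : ℂ => w * e) e ((s:ℂ)) := by
    simpa using (hasDerivAt_id ((s:ℂ))).mul_const e
  have hA : HasDerivAt (fun σ : ℝ => f ((σ:ℂ) * e)) (deriv f z * e) s := by
    have h1 : HasDerivAt f (deriv f z) ((s:ℂ) * e) := (han _ hz).differentiableAt.hasDerivAt
    exact (HasDerivAt.comp ((s:ℂ)) h1 hmul).comp_ofReal
  have hB : HasDerivAt (fun σ : ℝ => deriv f ((σ:ℂ) * e)) (deriv (deriv f) z * e) s := by
    have h1 : HasDerivAt (deriv f) (deriv (deriv f) z) ((s:ℂ) * e) :=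
      (han' _ hz).differentiableAt.hasDerivAt
    exact (HasDerivAt.comp ((s:ℂ)) h1 hmul).comp_ofReal
  have hN := hasDerivAt_normSq_comp hB
  have hD0 := hasDerivAt_normSq_comp hA
  have hD : HasDerivAt (fun σ : ℝ => 1 + normSq (f ((σ:ℂ) * e)))
      (2 * ((deriv f z * e) * (starRingEnd ℂ) (f z)).re) s := by
    simpa using hD0.const_add 1
  have hdpos : (0:ℝ) < 1 + normSq (f z) := by
    have := Complex.normSq_nonneg (f z); linarith
  have hnn : (0:ℝ) < normSq (deriv f z) := Complex.normSq_pos.mpr (hne z hz)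
  have hD2ne : (1 + normSq (f ((s:ℂ) * e))) ^ 2 ≠ 0 := by
    rw [← hzdef]; exact pow_ne_zero _ hdpos.ne'
  have hG := (hN.div (hD.pow 2) hD2ne)
  have hφ := ((hasDerivAt_pow 2 s).div_const 2).mul hG
  have hfunc : (fun σ : ℝ => σ ^ 2 / 2 * sphDeriv f ((σ:ℂ) * e) ^ 2)
      = fun σ : ℝ => σ ^ 2 / 2 *
          (normSq (deriv f ((σ:ℂ) * e)) / (1 + normSq (f ((σ:ℂ) * e))) ^ 2) := by
    funext σ; rw [sphDeriv_sq]
  rw [hfunc, sphDeriv_sq]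
  refine hφ.congr_deriv ?_
  simp only [Pi.div_apply, Pi.pow_apply]
  rw [hfun_eq (hne z hz), ← hzdef]
  have hP : (z * deriv (deriv f) z * (starRingEnd ℂ) (deriv f z)).re
      = s * ((deriv (deriv f) z * e) * (starRingEnd ℂ) (deriv f z)).re := by
    rw [show z * deriv (deriv f) z * (starRingEnd ℂ) (deriv f z)
        = (s:ℂ) * ((deriv (deriv f) z * e) * (starRingEnd ℂ) (deriv f z)) by
      rw [hzdef]; ring]
    exact Complex.re_ofReal_mul _ _
  have hQ : (z * deriv f z * (starRingEnd ℂ) (f z)).re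
      = s * ((deriv f z * e) * (starRingEnd ℂ) (f z)).re := by
    rw [show z * deriv f z * (starRingEnd ℂ) (f z)
        = (s:ℂ) * ((deriv f z * e) * (starRingEnd ℂ) (f z)) by rw [hzdef]; ring]
    exact Complex.re_ofReal_mul _ _
  rw [hP, hQ]
  set nn := normSq (deriv f z)
  set d := 1 + normSq (f z)
  set P := ((deriv (deriv f) z * e) * (starRingEnd ℂ) (deriv f z)).re
  set Q := ((deriv f z * e) * (starRingEnd ℂ) (f z)).re
  field_simp
  ring

lemma cont_sph {f : ℂ → ℂ} (hd : DifferentiableOn ℂ f (Metric.ball 0 1)) :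
    ContinuousOn (fun z => sphDeriv f z ^ 2) (Metric.ball (0:ℂ) 1) := by
  have han : AnalyticOnNhd ℂ f (Metric.ball 0 1) := hd.analyticOnNhd isOpen_ball
  have hc0 : ContinuousOn f (Metric.ball (0:ℂ) 1) := hd.continuousOn
  have hc1 : ContinuousOn (deriv f) (Metric.ball (0:ℂ) 1) := han.deriv.continuousOn
  have heq : (fun z : ℂ => sphDeriv f z ^ 2)
      = fun z => normSq (deriv f z) / (1 + normSq (f z)) ^ 2 := funext (sphDeriv_sq f)
  rw [heq]
  apply ContinuousOn.div
  · exact Complex.continuous_normSq.comp_continuousOn hc1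
  · exact (continuousOn_const.add (Complex.continuous_normSq.comp_continuousOn hc0)).pow 2
  · intro z _
    have := Complex.normSq_nonneg (f z)
    positivity

lemma cont_hfun {f : ℂ → ℂ} (hd : DifferentiableOn ℂ f (Metric.ball 0 1))
    (hne : ∀ z ∈ Metric.ball (0:ℂ) 1, deriv f z ≠ 0) :
    ContinuousOn (hfun f) (Metric.ball (0:ℂ) 1) := by
  have han : AnalyticOnNhd ℂ f (Metric.ball 0 1) := hd.analyticOnNhd isOpen_ball
  have hc0 : ContinuousOn f (Metric.ball (0:ℂ) 1) := hd.continuousOn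
  have hc1 : ContinuousOn (deriv f) (Metric.ball (0:ℂ) 1) := han.deriv.continuousOn
  have hc2 : ContinuousOn (deriv (deriv f)) (Metric.ball (0:ℂ) 1) :=
    han.deriv.deriv.continuousOn
  have hE : ContinuousOn (fun z => 1 + z * deriv (deriv f) z / deriv f z -
      2 * z * deriv f z * (starRingEnd ℂ) (f z) /
        ((1 + ‖f z‖ ^ 2 : ℝ) : ℂ)) (Metric.ball (0:ℂ) 1) := by
    apply ContinuousOn.sub
    · exact continuousOn_const.add ((continuousOn_id.mul hc2).div hc1 hne)
    · apply ContinuousOn.div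
      · exact ((continuousOn_const.mul continuousOn_id).mul hc1).mul
          (Complex.continuous_conj.comp_continuousOn hc0)
      · exact Complex.continuous_ofReal.comp_continuousOn
          (continuousOn_const.add ((continuous_norm.comp_continuousOn hc0).pow 2))
      · intro z _
        rw [Ne, Complex.ofReal_eq_zero]
        positivity
  exact Complex.continuous_re.comp_continuousOn hE

end Aux

/-- Identity relating circle means of `(f♯)²` to an area integral of `h_f (f♯)²`. -/
theorem circle_mean_eq_area_integral (f : ℂ → ℂ)
    (hd : DifferentiableOn ℂ f (Metric.ball 0 1))
    (hi : Set.InjOn f (Metric.ball 0 1)) :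
    ∀ r ∈ Set.Ioo (0 : ℝ) 1,
      (∫ t in (0 : ℝ)..(2 * π),
          sphDeriv f ((r : ℂ) * Complex.exp (t * Complex.I)) ^ 2) =
        (2 / r ^ 2) *
          ∫ z in Metric.ball (0 : ℂ) r, hfun f z * sphDeriv f z ^ 2 := by
  rintro r ⟨hr0, hr1⟩
  have hne : ∀ z ∈ Metric.ball (0:ℂ) 1, deriv f z ≠ 0 :=
    fun z hz => aux_deriv_ne_zero hd hi hz
  set G : ℂ → ℝ := fun z => hfun f z * sphDeriv f z ^ 2 with hGdef
  have hGcont : ContinuousOn G (Metric.ball (0:ℂ) 1) := (cont_hfun hd hne).mul (cont_sph hd)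
  have hπ : (0:ℝ) < π := Real.pi_pos
  -- the ray map and its basic estimate
  have habs : ∀ (s t : ℝ), ‖((s:ℂ) * Complex.exp ((t:ℝ) * Complex.I))‖ = |s| := by
    intro s t
    rw [norm_mul, Complex.norm_exp_ofReal_mul_I, mul_one, Complex.norm_real, Real.norm_eq_abs]
  have hmem : ∀ (s t : ℝ), |s| < 1 → (s:ℂ) * Complex.exp ((t:ℝ) * Complex.I) ∈
      Metric.ball (0:ℂ) 1 := by
    intro s t hs
    rw [Metric.mem_ball, dist_zero_right, habs]
    exact hs
  -- FTC along each ray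
  have hFTC : ∀ t : ℝ, (∫ s in (0:ℝ)..r, s * G ((s:ℂ) * Complex.exp ((t:ℝ) * Complex.I)))
      = r ^ 2 / 2 * sphDeriv f ((r:ℂ) * Complex.exp ((t:ℝ) * Complex.I)) ^ 2 := by
    intro t
    have he : ‖Complex.exp ((t:ℝ) * Complex.I)‖ = 1 :=
      Complex.norm_exp_ofReal_mul_I t
    have hderiv : ∀ s ∈ Set.uIcc (0:ℝ) r,
        HasDerivAt (fun σ : ℝ => σ ^ 2 / 2 *
            sphDeriv f ((σ:ℂ) * Complex.exp ((t:ℝ) * Complex.I)) ^ 2)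
          (s * G ((s:ℂ) * Complex.exp ((t:ℝ) * Complex.I))) s := by
      intro s hs
      rw [Set.uIcc_of_le hr0.le] at hs
      have habs' : |s| < 1 := by
        rw [_root_.abs_of_nonneg hs.1]; exact lt_of_le_of_lt hs.2 hr1
      exact key_deriv hd hne he habs'
    have hcontmap : Continuous (fun s : ℝ => (s:ℂ) * Complex.exp ((t:ℝ) * Complex.I)) :=
      Complex.continuous_ofReal.mul continuous_const
    have hmapsTo : Set.MapsTo (fun s : ℝ => (s:ℂ) * Complex.exp ((t:ℝ) * Complex.I))
        (Set.uIcc (0:ℝ) r) (Metric.ball (0:ℂ) 1) := by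
      intro s hs
      rw [Set.uIcc_of_le hr0.le] at hs
      exact hmem s t (by rw [_root_.abs_of_nonneg hs.1]; exact lt_of_le_of_lt hs.2 hr1)
    have hcont : ContinuousOn (fun s : ℝ => s * G ((s:ℂ) * Complex.exp ((t:ℝ) * Complex.I)))
        (Set.uIcc (0:ℝ) r) :=
      continuousOn_id.mul (hGcont.comp hcontmap.continuousOn hmapsTo)
    have := intervalIntegral.integral_eq_sub_of_hasDerivAt hderiv
      (hcont.intervalIntegrable)
    rw [this]
    norm_num
  -- polar coordinates
  set F : ℂ → ℝ := (Metric.ball (0:ℂ) r).indicator G with hFdef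
  have hsymm : ∀ p : ℝ × ℝ,
      Complex.polarCoord.symm p = (p.1:ℂ) * Complex.exp ((p.2:ℝ) * Complex.I) := by
    intro p
    simp only [Complex.polarCoord_symm_apply, Complex.exp_mul_I, ← Complex.ofReal_cos,
      ← Complex.ofReal_sin]
  have step1 : (∫ z in Metric.ball (0:ℂ) r, G z) = ∫ z, F z :=
    (integral_indicator measurableSet_ball).symm
  have step2 : (∫ z, F z)
      = ∫ p in polarCoord.target, p.1 • F (Complex.polarCoord.symm p) :=
    (Complex.integral_comp_polarCoord_symm F).symm
  set S : Set (ℝ × ℝ) := Set.Ioo (0:ℝ) r ×ˢ Set.Ioo (-π) π with hSdef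
  have hST : S ⊆ polarCoord.target := by
    rw [polarCoord_target]
    exact Set.prod_mono (fun x hx => hx.1) (fun x hx => hx)
  have step3 : (∫ p in polarCoord.target, p.1 • F (Complex.polarCoord.symm p))
      = ∫ p in S, p.1 • F (Complex.polarCoord.symm p) := by
    apply setIntegral_eq_of_subset_of_forall_diff_eq_zero
      polarCoord.open_target.measurableSet hST
    rintro ⟨s, t⟩ ⟨hpT, hpS⟩
    rw [polarCoord_target] at hpT
    have hs0 : 0 < s := hpT.1
    have hsr : ¬ s < r := by
      intro hsr
      exact hpS ⟨⟨hs0, hsr⟩, hpT.2⟩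
    have : F (Complex.polarCoord.symm (s, t)) = 0 := by
      rw [hFdef, Set.indicator_of_notMem]
      rw [hsymm, Metric.mem_ball, dist_zero_right, habs]
      rw [_root_.abs_of_pos hs0]
      exact hsr
    rw [this, smul_zero]
  set E : ℝ × ℝ → ℝ := fun p => p.1 * G ((p.1:ℂ) * Complex.exp ((p.2:ℝ) * Complex.I))
    with hEdef
  have hSmeas : MeasurableSet S := measurableSet_Ioo.prod measurableSet_Ioo
  have step4 : (∫ p in S, p.1 • F (Complex.polarCoord.symm p)) = ∫ p in S, E p := by
    apply setIntegral_congr_fun hSmeas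
    rintro ⟨s, t⟩ hp
    have hs : s ∈ Set.Ioo (0:ℝ) r := hp.1
    have hmem' : (s:ℂ) * Complex.exp ((t:ℝ) * Complex.I) ∈ Metric.ball (0:ℂ) r := by
      rw [Metric.mem_ball, dist_zero_right, habs, _root_.abs_of_pos hs.1]
      exact hs.2
    simp only [hEdef, hFdef, smul_eq_mul]
    rw [hsymm, Set.indicator_of_mem hmem']
  -- integrability of E on S
  have hmapK : Set.MapsTo (fun p : ℝ × ℝ => (p.1:ℂ) * Complex.exp ((p.2:ℝ) * Complex.I))
      (Set.Icc (0:ℝ) r ×ˢ Set.Icc (-π) π) (Metric.ball (0:ℂ) 1) := by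
    rintro ⟨s, t⟩ ⟨hs, _⟩
    exact hmem s t (by rw [_root_.abs_of_nonneg hs.1]; exact lt_of_le_of_lt hs.2 hr1)
  have hcontmap2 : Continuous (fun p : ℝ × ℝ => (p.1:ℂ) * Complex.exp ((p.2:ℝ) * Complex.I)) := by
    apply Continuous.mul
    · exact Complex.continuous_ofReal.comp continuous_fst
    · exact Complex.continuous_exp.comp
        ((Complex.continuous_ofReal.comp continuous_snd).mul continuous_const)
  have hEcont : ContinuousOn E (Set.Icc (0:ℝ) r ×ˢ Set.Icc (-π) π) :=
    continuous_fst.continuousOn.mul (hGcont.comp hcontmap2.continuousOn hmapK)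
  have hEint : IntegrableOn E S := by
    apply (hEcont.integrableOn_compact (isCompact_Icc.prod isCompact_Icc)).mono_set
    exact Set.prod_mono Set.Ioo_subset_Icc_self Set.Ioo_subset_Icc_self
  -- Fubini with swap
  have hswap : (∫ p in S, E p)
      = ∫ q in Set.Ioo (-π) π ×ˢ Set.Ioo (0:ℝ) r, E q.swap := by
    rw [hSdef]
    rw [Measure.volume_eq_prod, ← Measure.prod_restrict, ← Measure.prod_restrict]
    exact (integral_prod_swap E).symm
  have hEswapint : IntegrableOn (fun q : ℝ × ℝ => E q.swap)
      (Set.Ioo (-π) π ×ˢ Set.Ioo (0:ℝ) r) := by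
    have h1 := hEint
    rw [IntegrableOn, hSdef, Measure.volume_eq_prod, ← Measure.prod_restrict] at h1
    have h2 := h1.swap
    rwa [IntegrableOn, Measure.volume_eq_prod, ← Measure.prod_restrict]
  have step5 : (∫ q in Set.Ioo (-π) π ×ˢ Set.Ioo (0:ℝ) r, E q.swap)
      = ∫ t in Set.Ioo (-π) π, ∫ s in Set.Ioo (0:ℝ) r, E (s, t) := by
    rw [Measure.volume_eq_prod]
    exact setIntegral_prod (fun q : ℝ × ℝ => E q.swap)
      (by rwa [← Measure.volume_eq_prod])
  -- inner integral via FTC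
  have step6 : ∀ t : ℝ, (∫ s in Set.Ioo (0:ℝ) r, E (s, t))
      = r ^ 2 / 2 * sphDeriv f ((r:ℂ) * Complex.exp ((t:ℝ) * Complex.I)) ^ 2 := by
    intro t
    rw [← integral_Ioc_eq_integral_Ioo, ← intervalIntegral.integral_of_le hr0.le]
    exact hFTC t
  have step7 : (∫ t in Set.Ioo (-π) π, ∫ s in Set.Ioo (0:ℝ) r, E (s, t))
      = ∫ t in Set.Ioo (-π) π,
          r ^ 2 / 2 * sphDeriv f ((r:ℂ) * Complex.exp ((t:ℝ) * Complex.I)) ^ 2 := by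
    apply setIntegral_congr_fun measurableSet_Ioo
    intro t _
    exact step6 t
  -- back to interval integral and periodicity
  have hper : Function.Periodic
      (fun t : ℝ => r ^ 2 / 2 * sphDeriv f ((r:ℂ) * Complex.exp ((t:ℝ) * Complex.I)) ^ 2)
      (2 * π) := by
    intro t
    have : ((t + 2 * π : ℝ) : ℂ) * Complex.I = (t:ℝ) * Complex.I + 2 * π * Complex.I := by
      push_cast; ring
    simp only [this, Complex.exp_add, Complex.exp_two_pi_mul_I, mul_one]
  have step8 : (∫ t in Set.Ioo (-π) π,
        r ^ 2 / 2 * sphDeriv f ((r:ℂ) * Complex.exp ((t:ℝ) * Complex.I)) ^ 2)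
      = ∫ t in (0:ℝ)..(2 * π),
          r ^ 2 / 2 * sphDeriv f ((r:ℂ) * Complex.exp ((t:ℝ) * Complex.I)) ^ 2 := by
    rw [← integral_Ioc_eq_integral_Ioo,
      ← intervalIntegral.integral_of_le (by linarith : -π ≤ π)]
    have := hper.intervalIntegral_add_eq (-π) 0
    rw [show -π + 2 * π = π by ring, zero_add] at this
    exact this
  have hrne : (r:ℝ) ^ 2 ≠ 0 := by positivity
  have htotal : (∫ z in Metric.ball (0:ℂ) r, G z)
      = r ^ 2 / 2 * ∫ t in (0:ℝ)..(2 * π),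
          sphDeriv f ((r:ℂ) * Complex.exp ((t:ℝ) * Complex.I)) ^ 2 := by
    rw [step1, step2, step3, step4, hswap, step5, step7, step8,
      ← intervalIntegral.integral_const_mul]
  rw [htotal]
  generalize (∫ t in (0:ℝ)..(2 * π), sphDeriv f ((r:ℂ) * Complex.exp ((t:ℝ) * Complex.I)) ^ 2) = X
  field_simp
end

section
/- Let f be a holomorphic function on the unit disk 𝔻 with f′(z) ≠ 0 for all z ∈ 𝔻. Then for every t ∈ [0,2π] and every r ∈ (0,1), the radial derivative identity ∂/∂r [ (1+r²) f♯(re^{it}) ] = (f♯(re^{it})/r) · [ (1+r²) h_f(re^{it}) − (1−r²) ] holds; equivalently, r · ∂/∂r log[(1+r²) f♯(re^{it})] = h_f(re^{it}) − (1−r²)/(1+r²). -/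
open Complex MeasureTheory Set Real

lemma comp_curve {f : ℂ → ℂ} {A : ℂ} {g : ℝ → ℂ} {g' : ℂ} {r : ℝ}
    (hf : HasDerivAt f A (g r)) (hg : HasDerivAt g g' r) :
    HasDerivAt (fun ρ => f (g ρ)) (A * g') r := by
  have := (hf.hasFDerivAt.restrictScalars ℝ).comp_hasDerivAt r hg
  have h2 : HasDerivAt (f ∘ g) (A * g') r := by simpa [mul_comm] using this
  exact h2

lemma hasDerivAt_curve (e : ℂ) (r : ℝ) :
    HasDerivAt (fun ρ : ℝ => (ρ : ℂ) * e) e r := by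
  simpa using (Complex.ofRealCLM.hasDerivAt (x := r)).mul_const e

lemma hasDerivAt_absSq {g : ℝ → ℂ} {g' : ℂ} {r : ℝ} (hg : HasDerivAt g g' r) :
    HasDerivAt (fun ρ => ‖g ρ‖ ^ 2) (2 * (g' * (starRingEnd ℂ) (g r)).re) r := by
  have hre : HasDerivAt (fun ρ => (g ρ).re) g'.re r :=
    (Complex.reCLM.hasFDerivAt.comp_hasDerivAt r hg :)
  have him : HasDerivAt (fun ρ => (g ρ).im) g'.im r :=
    (Complex.imCLM.hasFDerivAt.comp_hasDerivAt r hg :)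
  have h := (hre.pow 2).add (him.pow 2)
  have heq : ((fun ρ => (g ρ).re) ^ 2 + (fun ρ => (g ρ).im) ^ 2) = fun ρ => ‖g ρ‖ ^ 2 := by
    funext ρ; simp only [Pi.add_apply, Pi.pow_apply]; rw [Complex.sq_norm, Complex.normSq_apply]; ring
  rw [heq] at h
  refine HasDerivAt.congr_deriv h ?_
  simp [Complex.mul_re, Complex.conj_re, Complex.conj_im]
  ring

lemma hasDerivAt_absC {g : ℝ → ℂ} {g' : ℂ} {r : ℝ} (hg : HasDerivAt g g' r)
    (h0 : g r ≠ 0) :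
    HasDerivAt (fun ρ => ‖g ρ‖)
      ((g' * (starRingEnd ℂ) (g r)).re / ‖g r‖) r := by
  have h := (hasDerivAt_absSq hg).sqrt (by
    simpa using norm_ne_zero_iff.mpr h0)
  have heq : (fun ρ => Real.sqrt (‖g ρ‖ ^ 2)) = fun ρ => ‖g ρ‖ := by
    funext ρ; exact Real.sqrt_sq (norm_nonneg _)
  rw [heq] at h
  convert h using 1
  have ha : ‖g r‖ ≠ 0 := norm_ne_zero_iff.mpr h0
  rw [Real.sqrt_sq (norm_nonneg _)]
  field_simp


/-- Radial derivative identity for `(1+r²) f♯(re^{it})`. -/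
theorem radial_derivative_identity (f : ℂ → ℂ)
    (hd : DifferentiableOn ℂ f (Metric.ball 0 1))
    (hd' : ∀ z ∈ Metric.ball (0 : ℂ) 1, deriv f z ≠ 0) :
    ∀ t ∈ Set.Icc (0 : ℝ) (2 * π), ∀ r ∈ Set.Ioo (0 : ℝ) 1,
      deriv (fun ρ : ℝ =>
          (1 + ρ ^ 2) * sphDeriv f ((ρ : ℂ) * Complex.exp (t * Complex.I))) r =
        sphDeriv f ((r : ℂ) * Complex.exp (t * Complex.I)) / r *
          ((1 + r ^ 2) * hfun f ((r : ℂ) * Complex.exp (t * Complex.I)) -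
            (1 - r ^ 2)) ∧
      r * deriv (fun ρ : ℝ =>
          Real.log ((1 + ρ ^ 2) *
            sphDeriv f ((ρ : ℂ) * Complex.exp (t * Complex.I)))) r =
        hfun f ((r : ℂ) * Complex.exp (t * Complex.I)) -
          (1 - r ^ 2) / (1 + r ^ 2) := by
  intro t _ r hr
  set e : ℂ := Complex.exp (t * Complex.I) with he_def
  have he : ‖e‖ = 1 := Complex.norm_exp_ofReal_mul_I t
  set z : ℂ := (r : ℂ) * e with hz_def
  have hzball : z ∈ Metric.ball (0 : ℂ) 1 := by
    simp only [Metric.mem_ball, dist_zero_right, hz_def, norm_mul,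
      Complex.norm_real, Real.norm_eq_abs, he, mul_one, abs_of_pos hr.1]
    exact hr.2
  have han : AnalyticOnNhd ℂ f (Metric.ball 0 1) := hd.analyticOnNhd Metric.isOpen_ball
  have hfz : HasDerivAt f (deriv f z) z := ((han z hzball).differentiableAt).hasDerivAt
  have hd2 : HasDerivAt (deriv f) (deriv (deriv f) z) z :=
    ((han.deriv z hzball).differentiableAt).hasDerivAt
  set A : ℂ := deriv f z with hA_def
  set B : ℂ := deriv (deriv f) z with hB_def
  set w : ℂ := f z with hw_def
  have hA : A ≠ 0 := hd' z hzball
  set a : ℝ := ‖A‖ with ha_def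
  set b : ℝ := 1 + ‖w‖ ^ 2 with hb_def
  have ha : 0 < a := norm_pos_iff.mpr hA
  have hb : 0 < b := by positivity
  have hr0 : r ≠ 0 := ne_of_gt hr.1
  set p : ℝ := (B * e * (starRingEnd ℂ) A).re with hp_def
  set q : ℝ := (A * e * (starRingEnd ℂ) w).re with hq_def
  have hcurve := hasDerivAt_curve e r
  have hF : HasDerivAt (fun ρ : ℝ => f ((ρ : ℂ) * e)) (A * e) r := comp_curve hfz hcurve
  have hG : HasDerivAt (fun ρ : ℝ => deriv f ((ρ : ℂ) * e)) (B * e) r :=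
    comp_curve hd2 hcurve
  have hu : HasDerivAt (fun ρ : ℝ => ‖f ((ρ : ℂ) * e)‖ ^ 2) (2 * q) r :=
    hasDerivAt_absSq hF
  have hv : HasDerivAt (fun ρ : ℝ => ‖deriv f ((ρ : ℂ) * e)‖) (p / a) r :=
    hasDerivAt_absC hG hA
  have hden : HasDerivAt (fun ρ : ℝ => 1 + ‖f ((ρ : ℂ) * e)‖ ^ 2) (2 * q) r :=
    hu.const_add 1
  have hquot : HasDerivAt
      (fun ρ : ℝ => ‖deriv f ((ρ : ℂ) * e)‖ / (1 + ‖f ((ρ : ℂ) * e)‖ ^ 2))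
      ((p / a * b - a * (2 * q)) / b ^ 2) r := hv.div hden hb.ne'
  have hpoly : HasDerivAt (fun ρ : ℝ => 1 + ρ ^ 2) (2 * r) r := by
    simpa using (hasDerivAt_pow 2 r).const_add 1
  have hg : HasDerivAt
      (fun ρ : ℝ => (1 + ρ ^ 2) * sphDeriv f ((ρ : ℂ) * e))
      (2 * r * (a / b) + (1 + r ^ 2) * ((p / a * b - a * (2 * q)) / b ^ 2)) r := by
    exact hpoly.mul hquot
  have hh : hfun f z = 1 + r * p / a ^ 2 - 2 * (r * q) / b := by
    have hnA : A * (starRingEnd ℂ) A = ((a ^ 2 : ℝ) : ℂ) := by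
      rw [Complex.mul_conj]; norm_cast; exact (Complex.sq_norm A).symm
    have ha2 : ((a ^ 2 : ℝ) : ℂ) ≠ 0 := by
      exact_mod_cast pow_ne_zero 2 ha.ne'
    have h1 : z * B / A = z * B * (starRingEnd ℂ) A / ((a ^ 2 : ℝ) : ℂ) := by
      rw [eq_div_iff ha2, ← hnA]
      field_simp [hA]
    simp only [hfun, ← hA_def, ← hB_def, ← hw_def, ← hb_def, h1]
    simp only [hfun, ← hA_def, ← hB_def, ← hw_def, ← hb_def, h1, Complex.sub_re,
      Complex.add_re, Complex.one_re, Complex.div_ofReal_re, hp_def, hq_def, hz_def,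
      Complex.mul_re, Complex.mul_im, Complex.ofReal_re, Complex.ofReal_im,
      Complex.conj_re, Complex.conj_im]
    norm_num
    ring
  have hfsph : sphDeriv f z = a / b := rfl
  constructor
  · rw [hg.deriv, hfsph, hh]
    field_simp
    ring
  · have hgr : (0 : ℝ) < (1 + r ^ 2) * sphDeriv f ((r : ℂ) * e) := by
      rw [hfsph]; positivity
    have hlog := hg.log hgr.ne'
    rw [hlog.deriv, hfsph, hh]
    field_simp
    ring
end
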